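/- With notation as in the construction of the purified t-structure: if F ∈ D_{≤w} (bounded-above version) and Hom(F, G) = 0 for all G ∈ D^{≥n+1} ∩ D_{≤w} ∩ D_{≥w}, then F ∈ (D^{≤n} * D_{≤w-1}) ∩ D_{≤w}. -/

import Mathlib

open CategoryTheory Limits Pretriangulated Triangulated

universe v u

variable {D : Type u} [Category.{v} D] [HasZeroObject D] [Preadditive D] [HasShift D ℤ]
  [∀ n : ℤ, (shiftFunctor D n).Additive] [Pretriangulated D] [HasBinaryBiproducts D]

/-- A (bounded) baric structure on a triangulated category `D`. -/
structure BaricStructure (D : Type u) [Category.{v} D] [HasZeroObject D] [Preadditive D]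
    [HasShift D ℤ] [∀ n : ℤ, (shiftFunctor D n).Additive] [Pretriangulated D]
    [HasBinaryBiproducts D] where
  le : ℤ → Set D
  ge : ℤ → Set D
  le_iso {w : ℤ} {X Y : D} (e : X ≅ Y) : X ∈ le w → Y ∈ le w
  ge_iso {w : ℤ} {X Y : D} (e : X ≅ Y) : X ∈ ge w → Y ∈ ge w
  le_zero (w : ℤ) (Z : D) (hZ : IsZero Z) : Z ∈ le w
  ge_zero (w : ℤ) (Z : D) (hZ : IsZero Z) : Z ∈ ge w
  le_shift (w : ℤ) (n : ℤ) (X : D) : X ∈ le w → X⟦n⟧ ∈ le w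
  ge_shift (w : ℤ) (n : ℤ) (X : D) : X ∈ ge w → X⟦n⟧ ∈ ge w
  le_ext₂ (w : ℤ) (T : Triangle D) (hT : T ∈ distTriang D) :
    T.obj₁ ∈ le w → T.obj₃ ∈ le w → T.obj₂ ∈ le w
  ge_ext₂ (w : ℤ) (T : Triangle D) (hT : T ∈ distTriang D) :
    T.obj₁ ∈ ge w → T.obj₃ ∈ ge w → T.obj₂ ∈ ge w
  le_summand (w : ℤ) (X Y : D) : (X ⊞ Y) ∈ le w → X ∈ le w
  ge_summand (w : ℤ) (X Y : D) : (X ⊞ Y) ∈ ge w → X ∈ ge w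
  le_mono (w : ℤ) : le w ⊆ le (w + 1)
  ge_antitone (w : ℤ) : ge (w + 1) ⊆ ge w
  hom_zero {w : ℤ} {A B : D} (hA : A ∈ le w) (hB : B ∈ ge (w + 1)) (f : A ⟶ B) : f = 0
  exists_triangle (X : D) (w : ℤ) : ∃ (A B : D) (f : A ⟶ X) (g : X ⟶ B)
    (h : B ⟶ A⟦(1 : ℤ)⟧), (Triangle.mk f g h ∈ distTriang D) ∧ A ∈ le w ∧ B ∈ ge (w + 1)
  bounded (X : D) : ∃ v w : ℤ, X ∈ ge v ∧ X ∈ le w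

/-- The `*` operation on classes of objects of a triangulated category (BBD 1.3.9):
`X ∈ S * T` iff there is a distinguished triangle `A → X → B →` with `A ∈ S`, `B ∈ T`. -/
def starOp (S T : Set D) : Set D :=
  { X | ∃ (A B : D) (f : A ⟶ X) (g : X ⟶ B) (h : B ⟶ A⟦(1 : ℤ)⟧),
      (Triangle.mk f g h ∈ distTriang D) ∧ A ∈ S ∧ B ∈ T }

omit [HasBinaryBiproducts D] in
/-- Hom vanishing for a t-structure: maps from `LE n₀` to `GE n₁` vanish when `n₀ < n₁`. -/
lemma tstructure_hom_zero (t : TStructure D) {n₀ n₁ : ℤ} (h : n₀ < n₁) {X Y : D}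
    (hX : t.le n₀ X) (hY : t.ge n₁ Y) (f : X ⟶ Y) : f = 0 := by
  have hX' : t.le 0 (X⟦n₀⟧) := t.le_shift n₀ n₀ 0 (by omega) X hX
  have hY' : t.ge 1 (Y⟦n₀⟧) := by
    have := t.ge_shift n₁ n₀ (n₁ - n₀) (by omega) Y hY
    exact t.ge_antitone (show (1 : ℤ) ≤ n₁ - n₀ by omega) _ this
  have hz : (shiftFunctor D n₀).map f = 0 := t.zero' _ hX' hY'
  apply (shiftFunctor D n₀).map_injective
  simpa using hz

/-- If, for every baric truncation triangle `P ⟶ B ⟶ Q` at level `v`, the map `B ⟶ Q`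
vanishes, then `B ∈ le v`. -/
lemma le_of_baric_hom_zero (b : BaricStructure D) (v : ℤ) (B : D)
    (hyp : ∀ (P Q : D) (f : P ⟶ B) (g : B ⟶ Q) (h : Q ⟶ P⟦(1 : ℤ)⟧),
      (Triangle.mk f g h ∈ distTriang D) → P ∈ b.le v → Q ∈ b.ge (v + 1) → g = 0) :
    B ∈ b.le v := by
  obtain ⟨P, Q, f, g, h, hT, hP, hQ⟩ := b.exists_triangle B v
  have hg : g = 0 := hyp P Q f g h hT hP hQ
  obtain ⟨r, hr⟩ := Triangle.yoneda_exact₃ _ hT (𝟙 Q) (by simp [hg]; exact zero_comp)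
  have hr0 : r = 0 := b.hom_zero (b.le_shift v 1 P hP) hQ r
  have hQ0 : IsZero Q := by
    rw [IsZero.iff_id_eq_zero, hr, hr0, comp_zero]; rfl
  have : IsIso f := (Triangle.isZero₃_iff_isIso₁ _ hT).1 hQ0
  exact b.le_iso (asIso f) hP

/-- converse half of Lemma 3.2: Suppose `D` carries a baric structure and a
t-structure with `β_{≥w}` left t-exact.  If `F ∈ D_{≤w}` and `Hom(F, G) = 0` for all
`G ∈ D^{≥n+1} ∩ D_{≤w} ∩ D_{≥w}`, then `F ∈ (D^{≤n} * D_{≤w-1}) ∩ D_{≤w}`. -/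
theorem mem_purified_aisle_of_hom_vanishing
    (b : BaricStructure D) (t : TStructure D) (w n : ℤ)
    -- `β_{≥ w'}` is left t-exact (triangle formulation)
    (hbeta : ∀ (w' m : ℤ) (T : Triangle D), T ∈ (distTriang D) → T.obj₁ ∈ b.le w' →
      T.obj₃ ∈ b.ge (w' + 1) → t.ge m T.obj₂ → t.ge m T.obj₃)
    (F : D) (hF : F ∈ b.le w)
    (hvanish : ∀ G : D, t.ge (n + 1) G → G ∈ b.le w → G ∈ b.ge w →
      ∀ f : F ⟶ G, f = 0) :
    F ∈ starOp ({X | t.le n X}) (b.le (w - 1)) ∩ b.le w := by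
  -- t-structure truncation triangle `A ⟶ F ⟶ B` with `A ∈ D^{≤n}`, `B ∈ D^{≥n+1}`
  obtain ⟨A, B, hA, hB, f, g, h, hT⟩ := t.exists_triangle F n (n + 1) rfl
  have hA1 : t.le (n - 1) (A⟦(1 : ℤ)⟧) := t.le_shift n 1 (n - 1) (by omega) A hA
  -- Step 1: `B = τ_{≥ n+1} F ∈ D_{≤ w}`.
  have hBlew : B ∈ b.le w := by
    apply le_of_baric_hom_zero b w B
    intro P Q fp gp hp hTp hPle hQge
    have hQGE : t.ge (n + 1) Q := hbeta w (n + 1) _ hTp hPle hQge hB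
    have hcomp : g ≫ gp = 0 := b.hom_zero hF hQge (g ≫ gp)
    obtain ⟨k, hk⟩ := Triangle.yoneda_exact₃ _ hT gp hcomp
    have hk0 : k = 0 := tstructure_hom_zero t (show n - 1 < n + 1 by omega) hA1 hQGE k
    rw [hk, hk0, comp_zero]; rfl
  -- Step 2: `B ∈ D_{≤ w-1}`.
  have hBlew1 : B ∈ b.le (w - 1) := by
    apply le_of_baric_hom_zero b (w - 1) B
    intro P Q fp gp hp hTp hPle hQge
    have hQgew : Q ∈ b.ge w := by rwa [show w - 1 + 1 = w by omega] at hQge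
    have hQGE : t.ge (n + 1) Q := hbeta (w - 1) (n + 1) _ hTp hPle hQge hB
    have hPlew : P ∈ b.le w := by
      have := b.le_mono (w - 1) hPle
      rwa [show w - 1 + 1 = w by omega] at this
    have hQlew : Q ∈ b.le w := by
      apply b.le_ext₂ w _ (rot_of_distTriang _ hTp) hBlew
      exact b.le_shift w 1 P hPlew
    have hcomp : g ≫ gp = 0 := hvanish Q hQGE hQlew hQgew (g ≫ gp)
    obtain ⟨k, hk⟩ := Triangle.yoneda_exact₃ _ hT gp hcomp
    have hk0 : k = 0 := tstructure_hom_zero t (show n - 1 < n + 1 by omega) hA1 hQGE k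
    rw [hk, hk0, comp_zero]; rfl
  exact ⟨⟨A, B, f, g, h, hT, hA, hBlew1⟩, hF⟩
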